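/- (Uniqueness among ordered positive solutions.) Let N ≥ 1, 0 ≤ m ≤ 2, ε > 0, let a ∈ C(ℝ^N) ∩ L^∞(ℝ^N), and let J ∈ L¹(ℝ^N) be nonnegative, radially symmetric, with unit mass. Suppose u ∈ L¹(ℝ^N) ∩ L^∞(ℝ^N) and v ∈ L^∞(ℝ^N) both solve (KPP) almost everywhere, u > 0 and v > 0 almost everywhere, and u ≤ v almost everywhere. Then u = v almost everywhere. (Indeed, integrating the equations against each other yields ∫_{ℝ^N} u v (v − u) = 0.) -/

import Mathlib

open MeasureTheory Filter Metric Set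

noncomputable section

abbrev Sp (N : ℕ) := EuclideanSpace ℝ (Fin N)

/-- The rescaled kernel `J_ε(z) = ε^{-N} J(z/ε)`. -/
def Jresc (N : ℕ) (J : Sp N → ℝ) (ε : ℝ) (z : Sp N) : ℝ := (1 / ε ^ N) * J (ε⁻¹ • z)

/-- The convolution `(J_ε ∗ u)(x)`. -/
def convJ (N : ℕ) (J : Sp N → ℝ) (ε : ℝ) (u : Sp N → ℝ) (x : Sp N) : ℝ :=
  ∫ y, Jresc N J ε (x - y) * u y

/-- `u` satisfies the nonlocal KPP equation at the point `x`:
`ε^{-m} (J_ε ∗ u - u)(x) + u(x)(a(x) - u(x)) = 0`. -/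
def kppEq (N : ℕ) (J a : Sp N → ℝ) (m ε : ℝ) (u : Sp N → ℝ) (x : Sp N) : Prop :=
  (1 / ε ^ m) * (convJ N J ε u x - u x) + u x * (a x - u x) = 0

/-- Assumption (1.1): `a` continuous, bounded, `a⁺ ≢ 0`, `limsup_{|x|→∞} a(x) < 0`. -/
def assumpA (N : ℕ) (a : Sp N → ℝ) : Prop :=
  Continuous a ∧ (∃ C, ∀ x, |a x| ≤ C) ∧ (∃ x, 0 < a x) ∧
    (∃ R δ : ℝ, 0 < δ ∧ ∀ x : Sp N, R ≤ ‖x‖ → a x ≤ -δ)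

/-- Assumption (1.4): `J ∈ L¹` nonnegative, radially symmetric, with unit mass and
finite `m`-th order moment. -/
def assumpJ (N : ℕ) (J : Sp N → ℝ) (m : ℝ) : Prop :=
  Integrable J ∧ (∀ x, 0 ≤ J x) ∧ (∀ x y : Sp N, ‖x‖ = ‖y‖ → J x = J y) ∧
    (∫ x, J x) = 1 ∧ Integrable (fun x => J x * ‖x‖ ^ m)

/-- **Uniqueness among ordered positive solutions.** If `u ∈ L¹ ∩ L^∞` and `v ∈ L^∞` both
solve (KPP) a.e., are a.e. positive, and `u ≤ v` a.e., then `u = v` a.e. -/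
theorem statement15 (N : ℕ) (hN : 1 ≤ N) (m : ℝ) (hm0 : 0 ≤ m) (hm2 : m ≤ 2)
    (ε : ℝ) (hε : 0 < ε) (a J : Sp N → ℝ) (hacont : Continuous a)
    (habdd : ∃ C, ∀ x, |a x| ≤ C)
    (hJint : Integrable J) (hJpos : ∀ x, 0 ≤ J x)
    (hJrad : ∀ x y : Sp N, ‖x‖ = ‖y‖ → J x = J y) (hJmass : (∫ x, J x) = 1)
    (u v : Sp N → ℝ) (huint : Integrable u) (humeas : Measurable u)
    (hubdd : ∃ C, ∀ x, |u x| ≤ C) (hvmeas : Measurable v) (hvbdd : ∃ C, ∀ x, |v x| ≤ C)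
    (husol : ∀ᵐ x : Sp N, kppEq N J a m ε u x)
    (hvsol : ∀ᵐ x : Sp N, kppEq N J a m ε v x)
    (hupos : ∀ᵐ x : Sp N, 0 < u x) (hvpos : ∀ᵐ x : Sp N, 0 < v x)
    (huv : ∀ᵐ x : Sp N, u x ≤ v x) :
    u =ᵐ[volume] v := by
  classical
  obtain ⟨Cu, hCu⟩ := hubdd
  obtain ⟨Cv, hCv⟩ := hvbdd
  set g : Sp N → ℝ := Jresc N J ε with hgdef
  -- integrability of the rescaled kernel
  have hgint : Integrable g := by
    have h1 : Integrable (fun z : Sp N => J (ε⁻¹ • z)) :=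
      hJint.comp_smul (inv_ne_zero hε.ne')
    exact h1.const_mul (1 / ε ^ N)
  -- symmetry of the kernel
  have hgflip : ∀ x y : Sp N, g (y - x) = g (x - y) := by
    intro x y
    simp only [hgdef, Jresc]
    congr 1
    apply hJrad
    rw [norm_smul, norm_smul, norm_sub_rev]
  -- convolution rewriting
  have hconv : ∀ (w : Sp N → ℝ) (x : Sp N),
      convJ N J ε w x = ∫ y, w y * g (x - y) := by
    intro w x
    unfold convJ
    exact integral_congr_ae (Eventually.of_forall fun y => mul_comm _ _)
  -- integrability of the convolution integrand
  have K0int : Integrable (fun p : Sp N × Sp N => u p.2 * g (p.1 - p.2))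
      (volume.prod volume) := by
    have := huint.convolution_integrand (ContinuousLinearMap.mul ℝ ℝ) hgint
    simpa using this
  have K1int : Integrable (fun p : Sp N × Sp N => v p.1 * (u p.2 * g (p.1 - p.2)))
      (volume.prod volume) := by
    refine K0int.bdd_mul ((hvmeas.comp measurable_fst).aestronglyMeasurable) (c := |Cv| + 1) (Eventually.of_forall ?_)
    intro p
    have := hCv p.1
    simp only [Real.norm_eq_abs]
    have : |v p.1| ≤ |Cv| := le_trans this (le_abs_self Cv)
    linarith
  have K2int : Integrable (fun p : Sp N × Sp N => u p.1 * (v p.2 * g (p.1 - p.2)))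
      (volume.prod volume) := by
    rw [← integrable_swap_iff]
    have : ((fun p : Sp N × Sp N => u p.1 * (v p.2 * g (p.1 - p.2))) ∘ Prod.swap)
        = fun p : Sp N × Sp N => v p.1 * (u p.2 * g (p.1 - p.2)) := by
      funext p
      simp only [Function.comp_apply, Prod.swap]
      rw [hgflip p.1 p.2]
      ring
    rw [this]
    exact K1int
  -- integrability of x ↦ v x * convJ u x  and  x ↦ u x * convJ v x
  have hI1 : Integrable (fun x => v x * convJ N J ε u x) := by
    have h := K1int.integral_prod_left
    refine h.congr (Eventually.of_forall fun x => ?_)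
    simp only [integral_const_mul, hconv]
  have hI2 : Integrable (fun x => u x * convJ N J ε v x) := by
    have h := K2int.integral_prod_left
    refine h.congr (Eventually.of_forall fun x => ?_)
    simp only [integral_const_mul, hconv]
  -- the symmetrization identity
  have hE1 : ∫ x, v x * convJ N J ε u x
      = ∫ p : Sp N × Sp N, v p.1 * (u p.2 * g (p.1 - p.2)) ∂(volume.prod volume) := by
    rw [show (fun x => v x * convJ N J ε u x)
        = fun x => ∫ y, v x * (u y * g (x - y)) from funext fun x => by
          rw [hconv u x, integral_const_mul]]
    exact integral_integral K1int
  have hE2 : ∫ x, u x * convJ N J ε v x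
      = ∫ p : Sp N × Sp N, u p.1 * (v p.2 * g (p.1 - p.2)) ∂(volume.prod volume) := by
    rw [show (fun x => u x * convJ N J ε v x)
        = fun x => ∫ y, u x * (v y * g (x - y)) from funext fun x => by
          rw [hconv v x, integral_const_mul]]
    exact integral_integral K2int
  have hswap : ∫ p : Sp N × Sp N, u p.1 * (v p.2 * g (p.1 - p.2)) ∂(volume.prod volume)
      = ∫ p : Sp N × Sp N, v p.1 * (u p.2 * g (p.1 - p.2)) ∂(volume.prod volume) := by
    rw [← integral_prod_swap (fun p : Sp N × Sp N => u p.1 * (v p.2 * g (p.1 - p.2)))]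
    refine integral_congr_ae (Eventually.of_forall fun p => ?_)
    simp only [Prod.swap]
    rw [hgflip p.1 p.2]
    ring
  have hkey : ∫ x, u x * convJ N J ε v x = ∫ x, v x * convJ N J ε u x := by
    rw [hE1, hE2, hswap]
  -- the function w = u v (v - u)
  set w : Sp N → ℝ := fun x => u x * v x * (v x - u x) with hwdef
  have hwint : Integrable w := by
    have : Integrable (fun x => (v x * (v x - u x)) * u x) := by
      refine huint.bdd_mul ((hvmeas.mul (hvmeas.sub humeas)).aestronglyMeasurable)
        (c := (|Cv| + 1) * (|Cv| + |Cu| + 1)) (Eventually.of_forall ?_)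
      intro x
      have h1 := hCv x; have h2 := hCu x
      have hv1 : |v x| ≤ |Cv| := le_trans h1 (le_abs_self Cv)
      have hu1 : |u x| ≤ |Cu| := le_trans h2 (le_abs_self Cu)
      simp only [Real.norm_eq_abs]
      calc |v x * (v x - u x)| = |v x| * |v x - u x| := abs_mul _ _
        _ ≤ (|Cv| + 1) * (|Cv| + |Cu| + 1) := by
            refine mul_le_mul (by linarith) ?_ (abs_nonneg _) (by positivity)
            calc |v x - u x| ≤ |v x| + |u x| := abs_sub _ _
              _ ≤ |Cv| + |Cu| + 1 := by linarith
    refine this.congr (Eventually.of_forall fun x => ?_)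
    simp only [hwdef]; ring
  have hweq : ∀ᵐ x : Sp N, w x
      = (1 / ε ^ m) * (u x * convJ N J ε v x - v x * convJ N J ε u x) := by
    filter_upwards [husol, hvsol] with x h1 h2
    unfold kppEq at h1 h2
    simp only [hwdef]
    linear_combination v x * h1 - u x * h2
  have hwzero : ∫ x, w x = 0 := by
    rw [integral_congr_ae hweq, integral_const_mul, integral_sub hI2 hI1, hkey]
    ring
  have hwnn : 0 ≤ᵐ[volume] w := by
    filter_upwards [hupos, hvpos, huv] with x hu hv huvle
    simp only [hwdef, Pi.zero_apply]
    have : 0 ≤ v x - u x := sub_nonneg.2 huvle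
    positivity
  have hwae : w =ᵐ[volume] 0 :=
    (integral_eq_zero_iff_of_nonneg_ae hwnn hwint).mp hwzero
  filter_upwards [hwae, hupos, hvpos] with x hwx hu hv
  simp only [hwdef, Pi.zero_apply] at hwx
  rcases mul_eq_zero.mp hwx with h | h
  · rcases mul_eq_zero.mp h with h' | h' <;> nlinarith
  · linarith
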